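/- (Theorem 1, subsequential convergence of the proximal linearized algorithm) Let g : ℝⁿ → ℝ be convex and continuous, let h : ℝⁿ → ℝ be convex and differentiable with continuous gradient ∇h, and set f = g − h. Let (γ_k) be a sequence of reals with 0 < γ_min ≤ γ_k ≤ γ_max < ∞ for all k, and let (α_k) be a sequence in ℝⁿ such that for every k, α_{k+1} is a global minimizer of the proximal linearized subproblem α ↦ g(α) − ⟨∇h(α_k), α − α_k⟩ + (1/(2γ_k))·‖α − α_k‖². If (α_k) is bounded and α* is a cluster point of (α_k) (i.e., the limit of some subsequence), then α* is a critical point of f, that is, ∇h(α*) is a subgradient of g at α*: g(z) ≥ g(α*) + ⟨∇h(α*), z − α*⟩ for all z ∈ ℝⁿ. -/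

import Mathlib

set_option maxHeartbeats 1000000

open scoped RealInnerProductSpace
open Filter

/-- Gradient inequality for a convex differentiable function. -/
lemma convex_grad_ineq {n : ℕ} {h : EuclideanSpace ℝ (Fin n) → ℝ}
    (hh : ConvexOn ℝ Set.univ h) {w x : EuclideanSpace ℝ (Fin n)}
    (hx : HasGradientAt h w x) (y : EuclideanSpace ℝ (Fin n)) :
    h x + ⟪w, y - x⟫ ≤ h y := by
  set v := y - x with hv
  have hc : HasDerivAt (fun t : ℝ => x + t • v) v 0 := by
    simpa using ((hasDerivAt_id (0:ℝ)).smul_const v).const_add x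
  have hφ : HasDerivAt (fun t : ℝ => h (x + t • v)) ⟪w, v⟫ 0 := by
    have hfd : HasFDerivAt h (InnerProductSpace.toDual ℝ _ w) x :=
      hasGradientAt_iff_hasFDerivAt.mp hx
    have hfd' : HasFDerivAt h (InnerProductSpace.toDual ℝ _ w)
        ((fun t : ℝ => x + t • v) 0) := by simpa using hfd
    have h2 := hfd'.comp_hasDerivAt 0 hc
    simp at h2; exact h2
  have hslope : Tendsto (slope (fun t : ℝ => h (x + t • v)) 0) (nhdsWithin 0 (Set.Ioi 0))
      (nhds ⟪w, v⟫) :=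
    (hasDerivAt_iff_tendsto_slope.mp hφ).mono_left
      (nhdsWithin_mono 0 (fun t ht => ne_of_gt ht))
  have hev : ∀ᶠ t in nhdsWithin (0:ℝ) (Set.Ioi 0),
      slope (fun t : ℝ => h (x + t • v)) 0 t ≤ h y - h x := by
    filter_upwards [Ioc_mem_nhdsGT_of_mem (Set.left_mem_Ico.mpr one_pos)] with t ht
    have ht0 : (0:ℝ) < t := ht.1
    have hconv : h ((1 - t) • x + t • y) ≤ (1 - t) * h x + t * h y := by
      simpa [smul_eq_mul] using hh.2 (Set.mem_univ x) (Set.mem_univ y)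
        (show (0:ℝ) ≤ 1 - t by linarith [ht.2]) ht0.le (by ring)
    have hxy : x + t • v = (1 - t) • x + t • y := by rw [hv]; module
    have hs : slope (fun t : ℝ => h (x + t • v)) 0 t = (h (x + t • v) - h x) / t := by
      simp [slope_def_field]
    rw [hs, div_le_iff₀ ht0, hxy]
    nlinarith [hconv]
  have := le_of_tendsto hslope hev
  linarith

/-- **Theorem 1: subsequential convergence of the proximal linearized algorithm.**
Let `g : ℝⁿ → ℝ` be convex and continuous, `h : ℝⁿ → ℝ` convex and differentiable with
continuous gradient `∇h`, and `f = g − h`. Let `0 < γ_min ≤ γ_k ≤ γ_max` and let `(α_k)` be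
such that each `α_{k+1}` is a global minimizer of the proximal linearized subproblem
`α ↦ g(α) − ⟪∇h(α_k), α − α_k⟫ + (1/(2γ_k))·‖α − α_k‖²`. If `(α_k)` is bounded and `α*` is
a cluster point of `(α_k)`, then `α*` is a critical point of `f`, i.e. `∇h(α*)` is a
subgradient of `g` at `α*`. -/
theorem prox_linearized_cluster_point_critical (n : ℕ)
    (g h : EuclideanSpace ℝ (Fin n) → ℝ)
    (hg : ConvexOn ℝ Set.univ g) (hgcont : Continuous g)
    (hh : ConvexOn ℝ Set.univ h)
    (gradh : EuclideanSpace ℝ (Fin n) → EuclideanSpace ℝ (Fin n))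
    (hgrad : ∀ u : EuclideanSpace ℝ (Fin n), HasGradientAt h (gradh u) u)
    (hgradcont : Continuous gradh)
    (γ : ℕ → ℝ) (γmin γmax : ℝ) (hγmin : 0 < γmin)
    (hγ : ∀ k : ℕ, γmin ≤ γ k ∧ γ k ≤ γmax)
    (α : ℕ → EuclideanSpace ℝ (Fin n))
    (hstep : ∀ k : ℕ, ∀ β : EuclideanSpace ℝ (Fin n),
        g (α (k + 1)) - ⟪gradh (α k), α (k + 1) - α k⟫
            + (1 / (2 * γ k)) * ‖α (k + 1) - α k‖ ^ 2
          ≤ g β - ⟪gradh (α k), β - α k⟫ + (1 / (2 * γ k)) * ‖β - α k‖ ^ 2)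
    (hbdd : Bornology.IsBounded (Set.range α))
    (αstar : EuclideanSpace ℝ (Fin n)) (φ : ℕ → ℕ) (hφ : StrictMono φ)
    (hlim : Filter.Tendsto (fun j => α (φ j)) Filter.atTop (nhds αstar)) :
    ∀ z : EuclideanSpace ℝ (Fin n), g z ≥ g αstar + ⟪gradh αstar, z - αstar⟫ := by
  have hγpos : ∀ k, 0 < γ k := fun k => lt_of_lt_of_le hγmin (hγ k).1
  -- h is continuous
  have hhcont : Continuous h := by
    rw [continuous_iff_continuousAt]
    exact fun u => (hgrad u).continuousAt
  -- per-step subgradient inequality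
  have hsub : ∀ k (z : EuclideanSpace ℝ (Fin n)),
      g (α (k+1)) + ⟪gradh (α k), z - α (k+1)⟫
        - 2 * (1 / (2 * γ k)) * ⟪α (k+1) - α k, z - α (k+1)⟫ ≤ g z := by
    intro k z
    set a := α (k+1)
    set x := α k
    set w := gradh x
    set c := 1 / (2 * γ k) with hc
    have hγk := hγpos k
    have hcnn : 0 ≤ c := by
      rw [hc]
      exact div_nonneg zero_le_one (by linarith)
    -- for each t ∈ (0,1]
    have key : ∀ t : ℝ, t ∈ Set.Ioc (0:ℝ) 1 →
        g a + ⟪w, z - a⟫ - 2 * c * ⟪a - x, z - a⟫ - c * ‖z - a‖ ^ 2 * t ≤ g z := by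
      intro t ht
      have ht0 : (0:ℝ) < t := ht.1
      set β := a + t • (z - a) with hβ
      have e0 : β = (1 - t) • a + t • z := by rw [hβ]; module
      have e3 : g β ≤ (1 - t) * g a + t * g z := by
        rw [e0]
        simpa [smul_eq_mul] using hg.2 (Set.mem_univ a) (Set.mem_univ z)
          (show (0:ℝ) ≤ 1 - t by linarith [ht.2]) ht0.le (by ring)
      have eβx : β - x = (a - x) + t • (z - a) := by rw [hβ]; module
      have e1 : ⟪w, β - x⟫ = ⟪w, a - x⟫ + t * ⟪w, z - a⟫ := by
        rw [eβx, inner_add_right, real_inner_smul_right]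
      have e2 : ‖β - x‖ ^ 2 = ‖a - x‖ ^ 2 + 2 * (t * ⟪a - x, z - a⟫) + t ^ 2 * ‖z - a‖ ^ 2 := by
        rw [eβx, norm_add_sq_real, real_inner_smul_right, norm_smul]
        rw [mul_pow, Real.norm_eq_abs, sq_abs]
      have e4 := hstep k β
      rw [e1, e2] at e4
      -- combine: multiply target by t
      have keymul : t * (g a + ⟪w, z - a⟫ - 2 * c * ⟪a - x, z - a⟫ - c * ‖z - a‖ ^ 2 * t)
          ≤ t * g z := by nlinarith [e4, e3]
      exact le_of_mul_le_mul_left keymul ht0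
    -- let t → 0⁺
    have htend : Tendsto (fun t : ℝ =>
        g a + ⟪w, z - a⟫ - 2 * c * ⟪a - x, z - a⟫ - c * ‖z - a‖ ^ 2 * t)
        (nhdsWithin 0 (Set.Ioi 0))
        (nhds (g a + ⟪w, z - a⟫ - 2 * c * ⟪a - x, z - a⟫)) := by
      have : Continuous (fun t : ℝ =>
          g a + ⟪w, z - a⟫ - 2 * c * ⟪a - x, z - a⟫ - c * ‖z - a‖ ^ 2 * t) := by
        continuity
      have h0 := (this.tendsto 0).mono_left (nhdsWithin_le_nhds (s := Set.Ioi (0:ℝ)))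
      simpa using h0
    refine le_of_tendsto htend ?_
    filter_upwards [Ioc_mem_nhdsGT_of_mem (Set.left_mem_Ico.mpr one_pos)] with t ht
    exact key t ht
  -- decrease of F = g - h
  have hdec : ∀ k, (g (α (k+1)) - h (α (k+1)))
      + (1 / (2 * γ k)) * ‖α (k+1) - α k‖ ^ 2 ≤ g (α k) - h (α k) := by
    intro k
    have e4 := hstep k (α k)
    simp only [sub_self, inner_zero_right, norm_zero] at e4
    have hgr := convex_grad_ineq hh (hgrad (α k)) (α (k+1))
    nlinarith [e4, hgr]
  set F : ℕ → ℝ := fun k => g (α k) - h (α k) with hF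
  have hdecF : ∀ k, F (k+1) + (1 / (2 * γ k)) * ‖α (k+1) - α k‖ ^ 2 ≤ F k := by
    intro k; simpa only [hF] using hdec k
  have hanti : Antitone F := by
    apply antitone_nat_of_succ_le
    intro k
    have h2 : 0 ≤ (1 / (2 * γ k)) * ‖α (k+1) - α k‖ ^ 2 :=
      mul_nonneg (div_nonneg zero_le_one (by linarith [hγpos k])) (sq_nonneg _)
    exact (le_add_of_nonneg_right h2).trans (hdecF k)
  -- F bounded below
  have hbddF : BddBelow (Set.range F) := by
    have hcomp : IsCompact (closure (Set.range α)) := hbdd.isCompact_closure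
    have hcont : Continuous (fun u => g u - h u) := hgcont.sub hhcont
    obtain ⟨x0, _, hx0⟩ := hcomp.exists_isMinOn
      ⟨α 0, subset_closure ⟨0, rfl⟩⟩ hcont.continuousOn
    refine ⟨g x0 - h x0, ?_⟩
    rintro y ⟨k, rfl⟩
    exact hx0 (subset_closure ⟨k, rfl⟩)
  have hFtend : Tendsto F atTop (nhds (⨅ i, F i)) := tendsto_atTop_ciInf hanti hbddF
  have hdiff0 : Tendsto (fun k => F k - F (k+1)) atTop (nhds 0) := by
    have := hFtend.sub (hFtend.comp (tendsto_add_atTop_nat 1))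
    simpa using this
  -- steps go to zero
  have hΔsq : Tendsto (fun k => ‖α (k+1) - α k‖ ^ 2) atTop (nhds 0) := by
    have hub : ∀ k, ‖α (k+1) - α k‖ ^ 2 ≤ 2 * γmax * (F k - F (k+1)) := by
      intro k
      have h1 := hdecF k
      have h2 := (hγ k).1
      have h3 := (hγ k).2
      have h4 := hγpos k
      have h5 : (1 / (2 * γ k)) * ‖α (k+1) - α k‖ ^ 2 ≤ F k - F (k+1) := by linarith
      have h6 : 0 ≤ F k - F (k+1) :=
        le_trans (mul_nonneg (div_nonneg zero_le_one (by linarith)) (sq_nonneg _)) h5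
      calc ‖α (k+1) - α k‖ ^ 2 = (2 * γ k) * ((1 / (2 * γ k)) * ‖α (k+1) - α k‖ ^ 2) := by
            field_simp
        _ ≤ (2 * γ k) * (F k - F (k+1)) := by
            apply mul_le_mul_of_nonneg_left h5 (by linarith)
        _ ≤ 2 * γmax * (F k - F (k+1)) := by nlinarith
    have hubt : Tendsto (fun k => 2 * γmax * (F k - F (k+1))) atTop (nhds 0) := by
      simpa using hdiff0.const_mul (2 * γmax)
    exact squeeze_zero (fun k => by positivity) hub hubt
  have hΔ : Tendsto (fun k => ‖α (k+1) - α k‖) atTop (nhds 0) := by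
    have := hΔsq.sqrt
    simpa [Real.sqrt_sq (norm_nonneg _)] using this
  -- subsequence of successors converges to αstar
  have hΔφ : Tendsto (fun j => ‖α (φ j + 1) - α (φ j)‖) atTop (nhds 0) :=
    hΔ.comp hφ.tendsto_atTop
  have hΔφ0 : Tendsto (fun j => α (φ j + 1) - α (φ j)) atTop (nhds 0) :=
    tendsto_zero_iff_norm_tendsto_zero.mpr hΔφ
  have hb : Tendsto (fun j => α (φ j + 1)) atTop (nhds αstar) := by
    have h1 := hlim.add hΔφ0
    rw [add_zero] at h1
    exact h1.congr (fun j => by abel)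
  -- pass to the limit in hsub
  intro z
  have hseq : ∀ j, g (α (φ j + 1)) + ⟪gradh (α (φ j)), z - α (φ j + 1)⟫
      - 2 * (1 / (2 * γ (φ j))) * ⟪α (φ j + 1) - α (φ j), z - α (φ j + 1)⟫ ≤ g z :=
    fun j => hsub (φ j) z
  have T1 : Tendsto (fun j => g (α (φ j + 1))) atTop (nhds (g αstar)) :=
    (hgcont.tendsto αstar).comp hb
  have T2 : Tendsto (fun j => ⟪gradh (α (φ j)), z - α (φ j + 1)⟫) atTop
      (nhds ⟪gradh αstar, z - αstar⟫) :=
    ((hgradcont.tendsto αstar).comp hlim).inner (tendsto_const_nhds.sub hb)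
  have T3 : Tendsto (fun j => 2 * (1 / (2 * γ (φ j)))
      * ⟪α (φ j + 1) - α (φ j), z - α (φ j + 1)⟫) atTop (nhds 0) := by
    apply squeeze_zero_norm (a := fun j =>
      (1 / γmin) * (‖α (φ j + 1) - α (φ j)‖ * ‖z - α (φ j + 1)‖))
    · intro j
      have hγj := hγpos (φ j)
      have h2 : 2 * (1 / (2 * γ (φ j))) = 1 / γ (φ j) := by field_simp
      rw [h2, Real.norm_eq_abs, abs_mul, abs_of_pos (one_div_pos.mpr hγj)]
      have hi : |⟪α (φ j + 1) - α (φ j), z - α (φ j + 1)⟫|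
          ≤ ‖α (φ j + 1) - α (φ j)‖ * ‖z - α (φ j + 1)‖ := abs_real_inner_le_norm _ _
      have hγle : 1 / γ (φ j) ≤ 1 / γmin := one_div_le_one_div_of_le hγmin (hγ (φ j)).1
      have := mul_le_mul hγle hi (abs_nonneg _) (le_of_lt (one_div_pos.mpr hγmin))
      linarith
    · have : Tendsto (fun j => ‖α (φ j + 1) - α (φ j)‖ * ‖z - α (φ j + 1)‖) atTop
          (nhds (0 * ‖z - αstar‖)) :=
        hΔφ.mul (tendsto_const_nhds.sub hb).norm
      simpa using this.const_mul (1 / γmin)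
  have TT : Tendsto (fun j => g (α (φ j + 1)) + ⟪gradh (α (φ j)), z - α (φ j + 1)⟫
      - 2 * (1 / (2 * γ (φ j))) * ⟪α (φ j + 1) - α (φ j), z - α (φ j + 1)⟫) atTop
      (nhds (g αstar + ⟪gradh αstar, z - αstar⟫)) := by
    have := (T1.add T2).sub T3
    simpa using this
  exact le_of_tendsto TT (Filter.Eventually.of_forall hseq)
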